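/- Suppose each operator f_i is continuously differentiable with ‖∇₁f_i(y, w)‖_op ≤ C_{∇f} for all (y, w), the map y ↦ ∇₁f_i(y, w) is L_{∇f}-Lipschitz (in Frobenius norm), and the exact backward gradients satisfy ‖v_i‖ ≤ C_v for all i. Let v_N = ṽ_N = 1, and define v_{i-1} = ∇₁f_i(y_{i-1}, w_i)ᵀ v_i and ṽ_{i-1} = ∇₁f_i(ỹ_{i-1}, w_i)ᵀ ṽ_i + ε_i for i = N,…,2, where ε_i ∈ ℝ^{d_{i-1}} are arbitrary backward perturbation vectors and ỹ_j, y_j are the perturbed and exact forward trajectories. Then for every i = 1,…,N−1, ‖ṽ_i − v_i‖² ≤ 3 C_v² L_{∇f}² Σ_{j=i}^{N−1} (3C_{∇f}²)^{j−i} ‖ỹ_j − y_j‖² + 3 Σ_{j=i}^{N−1} (3C_{∇f}²)^{j−i} ‖ε_{j+1}‖². -/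
import Mathlib


open scoped BigOperators

noncomputable section

/-- The Frobenius norm of a (continuous) linear map out of a Euclidean space:
`‖A‖_F = sqrt (∑_j ‖A e_j‖²)` where `(e_j)` is the standard orthonormal basis. -/
noncomputable def frobNorm {n : ℕ} {F : Type*} [NormedAddCommGroup F] [NormedSpace ℝ F]
    (A : EuclideanSpace ℝ (Fin n) →L[ℝ] F) : ℝ :=
  Real.sqrt (∑ j, ‖A (EuclideanSpace.single j 1)‖ ^ 2)

lemma opNorm_le_frobNorm {n : ℕ} {F : Type*} [NormedAddCommGroup F] [NormedSpace ℝ F]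
    (A : EuclideanSpace ℝ (Fin n) →L[ℝ] F) : ‖A‖ ≤ frobNorm A := by
  apply ContinuousLinearMap.opNorm_le_bound _ (Real.sqrt_nonneg _)
  intro x
  have hx : ∑ j, x j • EuclideanSpace.single j (1 : ℝ) = x := by
    simpa [EuclideanSpace.basisFun_apply, EuclideanSpace.basisFun_repr] using
      (EuclideanSpace.basisFun (Fin n) ℝ).sum_repr x
  have hAx : A x = ∑ j, x j • A (EuclideanSpace.single j 1) := by
    conv_lhs => rw [← hx]
    rw [map_sum]; simp
  calc ‖A x‖ ≤ ∑ j, ‖x j‖ * ‖A (EuclideanSpace.single j 1)‖ := by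
        rw [hAx]
        refine (norm_sum_le _ _).trans_eq ?_
        simp [norm_smul]
    _ ≤ frobNorm A * ‖x‖ := by
        rw [frobNorm, EuclideanSpace.norm_eq, ← Real.sqrt_mul (by positivity), mul_comm]
        rw [Real.le_sqrt (by positivity) (by positivity)]
        calc (∑ j, ‖x j‖ * ‖A (EuclideanSpace.single j 1)‖) ^ 2
            ≤ (∑ j, ‖x j‖ ^ 2) * ∑ j, ‖A (EuclideanSpace.single j 1)‖ ^ 2 :=
              Finset.sum_mul_sq_le_sq_mul_sq _ _ _
          _ = _ := by ring

set_option maxHeartbeats 2000000 in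
/-- **Perturbed backward-pass error propagation.**
Suppose each operator `f i` is continuously differentiable, `‖∇₁ f i (y, w)‖_op ≤ Cf`, the map
`y ↦ ∇₁ f i (y, w)` is `L1f`-Lipschitz in Frobenius norm, and the exact backward gradients
satisfy `‖v i‖ ≤ Cv`.  With exact/perturbed forward trajectories `y`, `ỹ` and backward passes
`v N = ṽ N = 1`, `v (i-1) = ∇₁f_i(y_{i-1},w_i)ᵀ v_i`,
`ṽ (i-1) = ∇₁f_i(ỹ_{i-1},w_i)ᵀ ṽ_i + ε_i`, we have for every `i = 1, …, N−1`:
`‖ṽ_i − v_i‖² ≤ 3 Cv² L1f² ∑_{j=i}^{N−1} (3Cf²)^{j−i} ‖ỹ_j − y_j‖²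
  + 3 ∑_{j=i}^{N−1} (3Cf²)^{j−i} ‖ε_{j+1}‖²`. -/
theorem perturbed_backward_error
    (N : ℕ) (hN : 2 ≤ N)
    (d dw : ℕ → ℕ) (hdN : d N = 1)
    (f : (i : ℕ) → EuclideanSpace ℝ (Fin (d (i - 1))) → EuclideanSpace ℝ (Fin (dw i)) →
        EuclideanSpace ℝ (Fin (d i)))
    (Cf L1f Cv : ℝ) (hCf : 0 ≤ Cf) (hL1f : 0 ≤ L1f) (hCv : 0 ≤ Cv)
    (hC1 : ∀ i, 1 ≤ i → i ≤ N →
      ContDiff ℝ 1 (fun p : EuclideanSpace ℝ (Fin (d (i - 1))) × EuclideanSpace ℝ (Fin (dw i)) =>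
        f i p.1 p.2))
    (hJ1 : ∀ i, 1 ≤ i → i ≤ N →
      ∀ (yv : EuclideanSpace ℝ (Fin (d (i - 1)))) (wi : EuclideanSpace ℝ (Fin (dw i))),
        ‖fderiv ℝ (fun z => f i z wi) yv‖ ≤ Cf)
    (hLipJ1 : ∀ i, 1 ≤ i → i ≤ N →
      ∀ (y₁ y₂ : EuclideanSpace ℝ (Fin (d (i - 1)))) (wi : EuclideanSpace ℝ (Fin (dw i))),
        frobNorm (fderiv ℝ (fun z => f i z wi) y₁ - fderiv ℝ (fun z => f i z wi) y₂) ≤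
          L1f * ‖y₁ - y₂‖)
    (x : EuclideanSpace ℝ (Fin (d 0)))
    (w : ∀ i, EuclideanSpace ℝ (Fin (dw i)))
    (y ytil v vtil : ∀ i, EuclideanSpace ℝ (Fin (d i)))
    (δ : ∀ i, EuclideanSpace ℝ (Fin (d i)))
    (ε : ∀ i, EuclideanSpace ℝ (Fin (d (i - 1))))
    (hy0 : y 0 = x) (hytil0 : ytil 0 = x)
    (hfwd : ∀ i, 1 ≤ i → i ≤ N → y i = f i (y (i - 1)) (w i))
    (hfwdp : ∀ i, 1 ≤ i → i ≤ N → ytil i = f i (ytil (i - 1)) (w i) + δ i)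
    (hvbound : ∀ i, 1 ≤ i → i ≤ N → ‖v i‖ ≤ Cv)
    (hvN : ∀ j, v N j = 1) (hvtilN : ∀ j, vtil N j = 1)
    (hbwd : ∀ i, 2 ≤ i → i ≤ N →
      v (i - 1) =
        ContinuousLinearMap.adjoint (fderiv ℝ (fun z => f i z (w i)) (y (i - 1))) (v i))
    (hbwdp : ∀ i, 2 ≤ i → i ≤ N →
      vtil (i - 1) =
        ContinuousLinearMap.adjoint (fderiv ℝ (fun z => f i z (w i)) (ytil (i - 1))) (vtil i)
          + ε i) :
    ∀ i, 1 ≤ i → i ≤ N - 1 →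
      ‖vtil i - v i‖ ^ 2 ≤
        3 * Cv ^ 2 * L1f ^ 2 *
            ∑ j ∈ Finset.Icc i (N - 1), (3 * Cf ^ 2) ^ (j - i) * ‖ytil j - y j‖ ^ 2
          + 3 * ∑ j ∈ Finset.Icc i (N - 1), (3 * Cf ^ 2) ^ (j - i) * ‖ε (j + 1)‖ ^ 2 := by
  have key : ∀ i, 1 ≤ i → i ≤ N - 1 →
      ‖vtil i - v i‖ ^ 2 ≤ 3 * Cf ^ 2 * ‖vtil (i + 1) - v (i + 1)‖ ^ 2
        + 3 * Cv ^ 2 * L1f ^ 2 * ‖ytil i - y i‖ ^ 2 + 3 * ‖ε (i + 1)‖ ^ 2 := by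
    intro i hi1 hi2
    have h2 : 2 ≤ i + 1 := by omega
    have h3 : i + 1 ≤ N := by omega
    set A := fderiv ℝ (fun z => f (i + 1) z (w (i + 1))) (y i) with hA
    set B := fderiv ℝ (fun z => f (i + 1) z (w (i + 1))) (ytil i) with hB
    have hb : v i = (ContinuousLinearMap.adjoint A) (v (i + 1)) := hbwd (i + 1) h2 h3
    have hbp : vtil i = (ContinuousLinearMap.adjoint B) (vtil (i + 1)) + ε (i + 1) :=
      hbwdp (i + 1) h2 h3
    have hdecomp : vtil i - v i =
        (ContinuousLinearMap.adjoint B) (vtil (i + 1) - v (i + 1))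
          + ((ContinuousLinearMap.adjoint B) (v (i + 1))
              - (ContinuousLinearMap.adjoint A) (v (i + 1)))
          + ε (i + 1) := by
      rw [hb, hbp, map_sub]; abel
    have hBnorm : ‖B‖ ≤ Cf := hJ1 (i + 1) (by omega) h3 (ytil i) (w (i + 1))
    have n1 : ‖(ContinuousLinearMap.adjoint B) (vtil (i + 1) - v (i + 1))‖ ≤
        Cf * ‖vtil (i + 1) - v (i + 1)‖ := by
      refine (ContinuousLinearMap.le_opNorm _ _).trans ?_
      have : ‖ContinuousLinearMap.adjoint B‖ = ‖B‖ :=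
        ContinuousLinearMap.adjoint.norm_map B
      rw [this]
      exact mul_le_mul_of_nonneg_right hBnorm (norm_nonneg _)
    have n2 : ‖(ContinuousLinearMap.adjoint B) (v (i + 1))
        - (ContinuousLinearMap.adjoint A) (v (i + 1))‖ ≤ L1f * ‖ytil i - y i‖ * Cv := by
      have e1 : (ContinuousLinearMap.adjoint B) (v (i + 1))
          - (ContinuousLinearMap.adjoint A) (v (i + 1))
          = (ContinuousLinearMap.adjoint (B - A)) (v (i + 1)) := by
        rw [map_sub]; rfl
      rw [e1]
      refine (ContinuousLinearMap.le_opNorm _ _).trans ?_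
      have h4 : ‖ContinuousLinearMap.adjoint (B - A)‖ ≤ L1f * ‖ytil i - y i‖ := by
        rw [ContinuousLinearMap.adjoint.norm_map]
        exact (opNorm_le_frobNorm _).trans
          (hLipJ1 (i + 1) (by omega) h3 (ytil i) (y i) (w (i + 1)))
      exact mul_le_mul h4 (hvbound (i + 1) (by omega) h3) (norm_nonneg _) (by positivity)
    have hnorm : ‖vtil i - v i‖ ≤ Cf * ‖vtil (i + 1) - v (i + 1)‖
        + L1f * ‖ytil i - y i‖ * Cv + ‖ε (i + 1)‖ := by
      rw [hdecomp]
      refine (norm_add_le _ _).trans ?_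
      gcongr
      exact (norm_add_le _ _).trans (by gcongr)
    have hsq : ‖vtil i - v i‖ ^ 2 ≤ (Cf * ‖vtil (i + 1) - v (i + 1)‖
        + L1f * ‖ytil i - y i‖ * Cv + ‖ε (i + 1)‖) ^ 2 :=
      pow_le_pow_left₀ (norm_nonneg _) hnorm 2
    nlinarith [sq_nonneg (Cf * ‖vtil (i + 1) - v (i + 1)‖ - L1f * ‖ytil i - y i‖ * Cv),
      sq_nonneg (Cf * ‖vtil (i + 1) - v (i + 1)‖ - ‖ε (i + 1)‖),
      sq_nonneg (L1f * ‖ytil i - y i‖ * Cv - ‖ε (i + 1)‖)]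
  have hsplit : ∀ (i : ℕ), i + 1 ≤ N - 1 → ∀ (a : ℕ → ℝ),
      ∑ j ∈ Finset.Icc i (N - 1), (3 * Cf ^ 2) ^ (j - i) * a j
        = a i + (3 * Cf ^ 2) *
            ∑ j ∈ Finset.Icc (i + 1) (N - 1), (3 * Cf ^ 2) ^ (j - (i + 1)) * a j := by
    intro i hi a
    have h1 : Finset.Icc i (N - 1) = insert i (Finset.Icc (i + 1) (N - 1)) := by
      rw [Finset.Icc_add_one_left_eq_Ioc, Finset.Ioc_insert_left (by omega)]
    rw [h1, Finset.sum_insert (by simp), Nat.sub_self, pow_zero, one_mul, Finset.mul_sum]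
    congr 1
    refine Finset.sum_congr rfl fun j hj => ?_
    simp only [Finset.mem_Icc] at hj
    have hji : j - i = (j - (i + 1)) + 1 := by omega
    rw [hji, pow_succ]; ring
  suffices H : ∀ k, ∀ i, 1 ≤ i → i + k = N - 1 →
      ‖vtil i - v i‖ ^ 2 ≤
        3 * Cv ^ 2 * L1f ^ 2 *
            ∑ j ∈ Finset.Icc i (N - 1), (3 * Cf ^ 2) ^ (j - i) * ‖ytil j - y j‖ ^ 2
          + 3 * ∑ j ∈ Finset.Icc i (N - 1), (3 * Cf ^ 2) ^ (j - i) * ‖ε (j + 1)‖ ^ 2 by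
    intro i hi1 hi2
    exact H (N - 1 - i) i hi1 (by omega)
  intro k
  induction k with
  | zero =>
    intro i hi1 hik
    have hk := key i hi1 (by omega)
    have hiN : i + 1 = N := by omega
    have hz : vtil (i + 1) - v (i + 1) = 0 := by
      rw [hiN]
      have hvv : vtil N = v N := by
        ext j; rw [hvtilN, hvN]
      rw [hvv, sub_self]
    rw [hz, norm_zero] at hk
    have hNi : N - 1 = i := by omega
    rw [hNi, Finset.Icc_self, Finset.sum_singleton, Finset.sum_singleton,
      Nat.sub_self, pow_zero, one_mul, one_mul]
    nlinarith [hk]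
  | succ k IH =>
    intro i hi1 hik
    have hk := key i hi1 (by omega)
    have hIH := IH (i + 1) (by omega) (by omega)
    rw [hsplit i (by omega), hsplit i (by omega)]
    have hq : (0 : ℝ) ≤ 3 * Cf ^ 2 := by positivity
    nlinarith [mul_le_mul_of_nonneg_left hIH hq]
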